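/- Let A ∈ ℝⁿˣⁿ be symmetric and not positive semidefinite (equivalently, its smallest eigenvalue λ_min(A) < 0), and let b ∈ ℝⁿ. Then the nonconvex trust region subproblem and its convex relaxation have the same optimal value: min { xᵀA x + 2 bᵀx : x ∈ ℝⁿ, ‖x‖² ≤ 1 } = min { xᵀ(A − λ_min(A) I_n) x + 2 bᵀx + λ_min(A) : x ∈ ℝⁿ, ‖x‖² ≤ 1 }, where the second problem is convex since A − λ_min(A) I_n ⪰ 0. -/

import Mathlib

open Matrix

section aux
variable {n : ℕ} {A : Matrix (Fin n) (Fin n) ℝ}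

lemma symm_dot (hA : A.IsSymm) (u x : Fin n → ℝ) :
    u ⬝ᵥ (A *ᵥ x) = (A *ᵥ u) ⬝ᵥ x := by
  rw [Matrix.dotProduct_mulVec, ← Matrix.mulVec_transpose, hA.eq]

lemma dot_self_nonneg (x : Fin n → ℝ) : 0 ≤ x ⬝ᵥ x :=
  Finset.sum_nonneg fun _ _ => mul_self_nonneg _

lemma parseval_dot (hH : A.IsHermitian) (x : Fin n → ℝ) :
    x ⬝ᵥ x = ∑ i, ((hH.eigenvectorBasis i : Fin n → ℝ) ⬝ᵥ x) ^ 2 := by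
  have h := (hH.eigenvectorBasis).sum_inner_mul_inner (WithLp.toLp 2 x : EuclideanSpace ℝ (Fin n)) (WithLp.toLp 2 x)
  simp only [PiLp.inner_apply, RCLike.inner_apply, starRingEnd_apply, star_trivial] at h
  calc x ⬝ᵥ x = ∑ i, (x ⬝ᵥ (hH.eigenvectorBasis i : Fin n → ℝ)) *
        ((hH.eigenvectorBasis i : Fin n → ℝ) ⬝ᵥ x) := by
          simp only [dotProduct] at h ⊢; rw [← h]; simp [mul_comm]
    _ = _ := by
        refine Finset.sum_congr rfl fun i _ => ?_
        rw [dotProduct_comm, sq]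

lemma rayleigh_dot (hA : A.IsSymm) (hH : A.IsHermitian) (x : Fin n → ℝ) :
    x ⬝ᵥ (A *ᵥ x) = ∑ i, hH.eigenvalues i *
      ((hH.eigenvectorBasis i : Fin n → ℝ) ⬝ᵥ x) ^ 2 := by
  have h := (hH.eigenvectorBasis).sum_inner_mul_inner
      (WithLp.toLp 2 x : EuclideanSpace ℝ (Fin n)) (WithLp.toLp 2 (A *ᵥ x : Fin n → ℝ) : EuclideanSpace ℝ (Fin n))
  simp only [PiLp.inner_apply, RCLike.inner_apply, starRingEnd_apply, star_trivial] at h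
  have key : ∀ i, (hH.eigenvectorBasis i : Fin n → ℝ) ⬝ᵥ (A *ᵥ x)
      = hH.eigenvalues i * ((hH.eigenvectorBasis i : Fin n → ℝ) ⬝ᵥ x) := by
    intro i
    rw [symm_dot hA,
      show A *ᵥ (hH.eigenvectorBasis i : Fin n → ℝ)
        = hH.eigenvalues i • (hH.eigenvectorBasis i : Fin n → ℝ) from
        hH.mulVec_eigenvectorBasis i,
      smul_dotProduct, smul_eq_mul]
  calc x ⬝ᵥ (A *ᵥ x) = ∑ i, (x ⬝ᵥ (hH.eigenvectorBasis i : Fin n → ℝ)) *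
        ((hH.eigenvectorBasis i : Fin n → ℝ) ⬝ᵥ (A *ᵥ x)) := by
          simp only [dotProduct] at h ⊢; simp only [mul_comm] at h ⊢; linarith
    _ = _ := by
        refine Finset.sum_congr rfl fun i _ => ?_
        rw [key i, dotProduct_comm]
        ring

lemma unit_eigvec (hH : A.IsHermitian) (i : Fin n) :
    (hH.eigenvectorBasis i : Fin n → ℝ) ⬝ᵥ (hH.eigenvectorBasis i : Fin n → ℝ) = 1 := by
  have h1 := hH.eigenvectorBasis.orthonormal.1 i
  have h2 : (inner ℝ (hH.eigenvectorBasis i) (hH.eigenvectorBasis i) : ℝ) = 1 := by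
    rw [real_inner_self_eq_norm_mul_norm, h1, mul_one]
  simp only [PiLp.inner_apply, RCLike.inner_apply, starRingEnd_apply, star_trivial,
    dotProduct] at h2 ⊢
  exact h2

end aux

set_option maxHeartbeats 1000000 in
/-- the trust region subproblem and its convex relaxation have the same
optimal value. `lmin` is the smallest eigenvalue of `A`, characterized as the greatest
`c` with `A - c I ⪰ 0`. -/
theorem stmt4 (n : ℕ) (A : Matrix (Fin n) (Fin n) ℝ) (hA : A.IsSymm)
    (hnpsd : ¬ A.PosSemidef) (b : Fin n → ℝ) (lmin : ℝ)
    (hlmin : IsGreatest {c : ℝ | (A - c • (1 : Matrix (Fin n) (Fin n) ℝ)).PosSemidef} lmin) :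
    sInf ((fun x : Fin n → ℝ => ((x ⬝ᵥ (A *ᵥ x) + 2 * (b ⬝ᵥ x) : ℝ) : EReal)) ''
        {x | x ⬝ᵥ x ≤ 1}) =
    sInf ((fun x : Fin n → ℝ =>
        ((x ⬝ᵥ ((A - lmin • (1 : Matrix (Fin n) (Fin n) ℝ)) *ᵥ x)
            + 2 * (b ⬝ᵥ x) + lmin : ℝ) : EReal)) ''
        {x | x ⬝ᵥ x ≤ 1}) := by
  have hH : A.IsHermitian := by
    rwa [Matrix.IsHermitian, Matrix.conjTranspose_eq_transpose_of_trivial]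
  have hexp : ∀ (c : ℝ) (x : Fin n → ℝ),
      x ⬝ᵥ ((A - c • (1 : Matrix (Fin n) (Fin n) ℝ)) *ᵥ x)
        = x ⬝ᵥ (A *ᵥ x) - c * (x ⬝ᵥ x) := by
    intro c x
    rw [Matrix.sub_mulVec, dotProduct_sub, Matrix.smul_mulVec,
      Matrix.one_mulVec, dotProduct_smul, smul_eq_mul]
  obtain ⟨x0, hx0⟩ : ∃ x : Fin n → ℝ, x ⬝ᵥ (A *ᵥ x) < 0 := by
    by_contra h
    push_neg at h
    exact hnpsd (Matrix.posSemidef_iff_dotProduct_mulVec.2 ⟨hH, fun x => by simpa [star_trivial] using h x⟩)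
  have hMq : ∀ x : Fin n → ℝ, lmin * (x ⬝ᵥ x) ≤ x ⬝ᵥ (A *ᵥ x) := by
    intro x
    have := (Matrix.posSemidef_iff_dotProduct_mulVec.1 hlmin.1).2 x
    rw [star_trivial, hexp] at this
    linarith
  have hlneg : lmin < 0 := by nlinarith [hMq x0, dot_self_nonneg x0]
  have heig_ge : ∀ i, lmin ≤ hH.eigenvalues i := by
    intro i
    have h1 := hMq (hH.eigenvectorBasis i : Fin n → ℝ)
    have h2 : ((hH.eigenvectorBasis i : Fin n → ℝ)) ⬝ᵥ (A *ᵥ (hH.eigenvectorBasis i : Fin n → ℝ))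
        = hH.eigenvalues i := by
      rw [show A *ᵥ (hH.eigenvectorBasis i : Fin n → ℝ)
          = hH.eigenvalues i • (hH.eigenvectorBasis i : Fin n → ℝ) from
          hH.mulVec_eigenvectorBasis i, dotProduct_smul, smul_eq_mul,
        unit_eigvec hH i, mul_one]
    rw [h2, unit_eigvec hH i, mul_one] at h1
    exact h1
  have hn : 0 < n := by
    rcases Nat.eq_zero_or_pos n with h | h
    · exfalso; subst h; simp [dotProduct] at hx0
    · exact h
  haveI : Nonempty (Fin n) := ⟨⟨0, hn⟩⟩
  -- some eigenvalue equals lmin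
  obtain ⟨i0, hi0⟩ : ∃ i, hH.eigenvalues i = lmin := by
    obtain ⟨j, _, hj⟩ := Finset.exists_mem_eq_inf' (Finset.univ_nonempty (α := Fin n))
      hH.eigenvalues
    set c := Finset.univ.inf' Finset.univ_nonempty hH.eigenvalues with hcdef
    have hcle : ∀ i, c ≤ hH.eigenvalues i := fun i =>
      Finset.inf'_le _ (Finset.mem_univ i)
    have hpsd : (A - c • (1 : Matrix (Fin n) (Fin n) ℝ)).PosSemidef := by
      rw [Matrix.posSemidef_iff_dotProduct_mulVec]
      constructor
      · refine hH.sub ?_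
        rw [Matrix.IsHermitian, Matrix.conjTranspose_smul, Matrix.conjTranspose_one,
          star_trivial]
      · intro x
        rw [star_trivial, hexp, rayleigh_dot hA hH, parseval_dot hH, Finset.mul_sum,
          ← Finset.sum_sub_distrib]
        refine Finset.sum_nonneg fun i _ => ?_
        have := hcle i
        nlinarith [sq_nonneg ((hH.eigenvectorBasis i : Fin n → ℝ) ⬝ᵥ x)]
    have hcl : c ≤ lmin := hlmin.2 hpsd
    exact ⟨j, le_antisymm (by rw [← hj]; exact hcl) (heig_ge j)⟩
  -- unit eigenvector with nonpositive inner product with b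
  obtain ⟨w, hw1, hw2, hw3⟩ : ∃ w : Fin n → ℝ, w ⬝ᵥ w = 1 ∧ A *ᵥ w = lmin • w ∧ b ⬝ᵥ w ≤ 0 := by
    set v := (hH.eigenvectorBasis i0 : Fin n → ℝ) with hv
    have hv1 : v ⬝ᵥ v = 1 := unit_eigvec hH i0
    have hv2 : A *ᵥ v = lmin • v := by
      rw [show A *ᵥ v = hH.eigenvalues i0 • v from hH.mulVec_eigenvectorBasis i0, hi0]
    rcases le_or_gt (b ⬝ᵥ v) 0 with h | h
    · exact ⟨v, hv1, hv2, h⟩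
    · exact ⟨-v, by rw [neg_dotProduct, dotProduct_neg, neg_neg, hv1],
        by rw [Matrix.mulVec_neg, hv2, smul_neg],
        by rw [dotProduct_neg]; linarith⟩
  -- main argument
  apply le_antisymm
  · -- LHS ≤ RHS : for each feasible x, find y feasible with f1 y ≤ f2 x
    refine sInf_le_sInf_of_isCoinitialFor ?_
    rintro z ⟨x, hx, rfl⟩
    have hx1 : x ⬝ᵥ x ≤ 1 := hx
    set s := x ⬝ᵥ w with hs
    have harg : 0 ≤ s ^ 2 + (1 - x ⬝ᵥ x) := by nlinarith [sq_nonneg s]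
    set t := -s + Real.sqrt (s ^ 2 + (1 - x ⬝ᵥ x)) with htdef
    have hts : (t + s) ^ 2 = s ^ 2 + (1 - x ⬝ᵥ x) := by
      have : t + s = Real.sqrt (s ^ 2 + (1 - x ⬝ᵥ x)) := by rw [htdef]; ring
      rw [this, Real.sq_sqrt harg]
    have ht : 0 ≤ t := by
      have h1 : |s| ≤ Real.sqrt (s ^ 2 + (1 - x ⬝ᵥ x)) := by
        rw [← Real.sqrt_sq_eq_abs]
        exact Real.sqrt_le_sqrt (by nlinarith)
      have h2 : s ≤ |s| := le_abs_self s
      rw [htdef]; linarith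
    set y := x + t • w with hy
    have hws : w ⬝ᵥ x = s := by rw [hs, dotProduct_comm]
    have hyy : y ⬝ᵥ y = x ⬝ᵥ x + 2 * t * s + t ^ 2 := by
      rw [hy, dotProduct_add, add_dotProduct, add_dotProduct,
        dotProduct_smul, smul_dotProduct, smul_dotProduct,
        dotProduct_smul, smul_eq_mul, smul_eq_mul, smul_eq_mul, smul_eq_mul,
        hw1, hws, ← hs]
      ring
    have hyy1 : y ⬝ᵥ y = 1 := by
      rw [hyy]; nlinarith [hts]
    have hwAx : w ⬝ᵥ (A *ᵥ x) = lmin * s := by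
      rw [symm_dot hA, hw2, smul_dotProduct, smul_eq_mul, hws]
    have hxAw : x ⬝ᵥ (A *ᵥ w) = lmin * s := by
      rw [hw2, dotProduct_smul, smul_eq_mul, ← hs]
    have hyAy : y ⬝ᵥ (A *ᵥ y) = x ⬝ᵥ (A *ᵥ x) + 2 * t * lmin * s + t ^ 2 * lmin := by
      rw [hy, Matrix.mulVec_add, Matrix.mulVec_smul, dotProduct_add,
        add_dotProduct, add_dotProduct, dotProduct_smul,
        smul_dotProduct, smul_dotProduct, dotProduct_smul,
        smul_eq_mul, smul_eq_mul, smul_eq_mul, smul_eq_mul, hwAx, hxAw, hw2,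
        dotProduct_smul, smul_eq_mul, hw1]
      ring
    have hby : b ⬝ᵥ y = b ⬝ᵥ x + t * (b ⬝ᵥ w) := by
      rw [hy, dotProduct_add, dotProduct_smul, smul_eq_mul]
    refine ⟨_, ⟨y, le_of_eq hyy1, rfl⟩, ?_⟩
    rw [EReal.coe_le_coe_iff, hexp, hyAy, hby]
    have heq : t ^ 2 + 2 * t * s + (x ⬝ᵥ x) - 1 = 0 := by nlinarith [hts]
    have h0 : lmin * (t ^ 2 + 2 * t * s + (x ⬝ᵥ x) - 1) = 0 := by rw [heq, mul_zero]
    nlinarith [mul_nonneg ht (neg_nonneg.mpr hw3), h0]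
  · -- RHS ≤ LHS : f2 x ≤ f1 x pointwise
    refine sInf_le_sInf_of_isCoinitialFor ?_
    rintro z ⟨x, hx, rfl⟩
    have hx1 : x ⬝ᵥ x ≤ 1 := hx
    refine ⟨_, ⟨x, hx, rfl⟩, ?_⟩
    rw [EReal.coe_le_coe_iff, hexp]
    nlinarith
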